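/- arXiv:0908.3436 — 3 statements merged into one kernel-verified Lean document; each statement's English description precedes it below -/
import Mathlib

section
/- Let 0 < α < 1 and define C_0 = 1 and C_k the unique positive solution of C_k + C_k^{1-α} = C_{k-1}^{1-α} for k ≥ 1. Then k^{1/α} · C_k tends to c_α = ((1-α)/α)^{1/α} as k → ∞. -/
open Real Filter Topology

theorem C_k_asymptotics (α : ℝ) (hα : 0 < α) (hα1 : α < 1) (C : ℕ → ℝ)
    (hC0 : C 0 = 1)
    (hCpos : ∀ k : ℕ, 0 < C (k + 1))
    (hCrec : ∀ k : ℕ, C (k + 1) + C (k + 1) ^ (1 - α) = C k ^ (1 - α)) :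
    Tendsto (fun k : ℕ => (k : ℝ) ^ (1 / α) * C k) atTop
      (nhds (((1 - α) / α) ^ (1 / α))) := by
  have h1α : 0 < 1 - α := by linarith
  set β : ℝ := α / (1 - α) with hβdef
  have hβ : 0 < β := div_pos hα h1α
  have hpos : ∀ k, 0 < C k := by
    intro k
    cases k with
    | zero => rw [hC0]; norm_num
    | succ n => exact hCpos n
  set D : ℕ → ℝ := fun k => (C k) ^ (-α) with hD
  -- C is decreasing
  have hdec : ∀ k, C (k + 1) < C k := by
    intro k
    have h : C (k + 1) ^ (1 - α) < C k ^ (1 - α) := by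
      have := hCrec k
      nlinarith [hCpos k]
    exact (Real.rpow_lt_rpow_iff (hpos _).le (hpos _).le h1α).mp h
  -- C tends to 0
  have hanti : Antitone C := antitone_nat_of_succ_le fun n => (hdec n).le
  have hbdd : BddBelow (Set.range C) := ⟨0, by rintro x ⟨k, rfl⟩; exact (hpos k).le⟩
  have hLlim : Tendsto C atTop (𝓝 (⨅ i, C i)) := tendsto_atTop_ciInf hanti hbdd
  set L : ℝ := ⨅ i, C i with hLdef
  have hL0 : 0 ≤ L := le_ciInf fun i => (hpos i).le
  have hC0lim : Tendsto C atTop (𝓝 0) := by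
    have hL1 : Tendsto (fun k => C (k + 1)) atTop (𝓝 L) :=
      hLlim.comp (tendsto_add_atTop_nat 1)
    have hrpL : Tendsto (fun k => C k ^ (1 - α)) atTop (𝓝 (L ^ (1 - α))) :=
      ((Real.continuousAt_rpow_const L (1 - α) (Or.inr h1α.le)).tendsto).comp hLlim
    have hrp1 : Tendsto (fun k => C (k + 1) ^ (1 - α)) atTop (𝓝 (L ^ (1 - α))) :=
      hrpL.comp (tendsto_add_atTop_nat 1)
    have hlhs : Tendsto (fun k => C (k + 1) + C (k + 1) ^ (1 - α)) atTop
        (𝓝 (L + L ^ (1 - α))) := hL1.add hrp1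
    have hrhs : Tendsto (fun k => C (k + 1) + C (k + 1) ^ (1 - α)) atTop
        (𝓝 (L ^ (1 - α))) := by
      apply Tendsto.congr _ hrpL
      intro k; exact (hCrec k).symm
    have heq : L + L ^ (1 - α) = L ^ (1 - α) := tendsto_nhds_unique hlhs hrhs
    have : L = 0 := by linarith
    rwa [this] at hLlim
  -- key identity: D k in terms of C (k+1)
  have hkey : ∀ k, D k = (C (k + 1)) ^ (-α) * (1 + (C (k + 1)) ^ α) ^ (-β) := by
    intro k
    set x := C (k + 1) with hx
    have hxpos : 0 < x := hCpos k
    have h1 : C k ^ (1 - α) = x ^ (1 - α) * (1 + x ^ α) := by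
      rw [mul_add, mul_one, ← Real.rpow_add hxpos, show (1 - α) + α = 1 by ring,
        Real.rpow_one, ← hCrec k]
      ring
    have hexp : (1 - α) * (-β) = -α := by
      rw [hβdef]; field_simp
    have h2 : D k = (C k ^ (1 - α)) ^ (-β) := by
      rw [hD, ← Real.rpow_mul (hpos k).le, hexp]
    rw [h2, h1, Real.mul_rpow (Real.rpow_nonneg hxpos.le _)
      (by positivity), ← Real.rpow_mul hxpos.le, hexp]
  -- the difference D (k+1) - D k
  have hdiffeq : ∀ k, D (k + 1) - D k =
      (1 - (1 + (C (k + 1)) ^ α) ^ (-β)) * ((C (k + 1)) ^ α)⁻¹ := by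
    intro k
    have hxpos : 0 < C (k + 1) := hCpos k
    have e1 : D (k + 1) = (C (k + 1) ^ α)⁻¹ := Real.rpow_neg hxpos.le α
    rw [e1, hkey k, Real.rpow_neg hxpos.le α]
    ring
  -- derivative limit lemma
  have hslope : Tendsto (fun t : ℝ => (1 - (1 + t) ^ (-β)) * t⁻¹) (𝓝[>] (0:ℝ)) (𝓝 β) := by
    have h1 : HasDerivAt (fun t : ℝ => 1 + t) 1 0 := by
      simpa using (hasDerivAt_id (0:ℝ)).const_add 1
    have h3 : HasDerivAt (fun t : ℝ => (1 + t) ^ (-β)) (-β) 0 := by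
      have h2 : HasDerivAt (fun u : ℝ => u ^ (-β)) (-β * ((1:ℝ) + 0) ^ (-β - 1)) ((1:ℝ) + 0) :=
        Real.hasDerivAt_rpow_const (Or.inl (by norm_num))
      have := h2.comp 0 h1
      simpa [Real.one_rpow, Function.comp_def] using this
    have h4 := hasDerivAt_iff_tendsto_slope.mp h3
    have h5 : Tendsto (fun t : ℝ => -(slope (fun t : ℝ => (1 + t) ^ (-β)) 0 t))
        (𝓝[≠] (0:ℝ)) (𝓝 β) := by
      simpa using h4.neg
    have h6 : 𝓝[>] (0:ℝ) ≤ 𝓝[≠] (0:ℝ) :=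
      nhdsWithin_mono 0 fun x hx => ne_of_gt hx
    apply (h5.mono_left h6).congr'
    filter_upwards [self_mem_nhdsWithin] with t (ht : 0 < t)
    rw [slope_def_field]
    simp only [add_zero, sub_zero, Real.one_rpow, div_eq_mul_inv]; ring
  -- C (k+1) ^ α tends to 0 within Ioi 0
  have htk : Tendsto (fun k => (C (k + 1)) ^ α) atTop (𝓝[>] (0:ℝ)) := by
    have h1 : Tendsto (fun k => C (k + 1)) atTop (𝓝 0) :=
      hC0lim.comp (tendsto_add_atTop_nat 1)
    have h2 : Tendsto (fun k => (C (k + 1)) ^ α) atTop (𝓝 0) := by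
      have := ((Real.continuousAt_rpow_const 0 α (Or.inr hα.le)).tendsto).comp h1
      simpa [Real.zero_rpow hα.ne', Function.comp_def] using this
    refine tendsto_nhdsWithin_of_tendsto_nhds_of_eventually_within _ h2 ?_
    filter_upwards with k
    exact Real.rpow_pos_of_pos (hCpos k) α
  have hdifflim : Tendsto (fun k => D (k + 1) - D k) atTop (𝓝 β) := by
    have := hslope.comp htk
    apply this.congr
    intro k
    exact (hdiffeq k).symm
  -- Cesàro
  have hces := hdifflim.cesaro
  have hsum : ∀ n : ℕ, ∑ i ∈ Finset.range n, (D (i + 1) - D i) = D n - D 0 :=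
    fun n => Finset.sum_range_sub D n
  have hDn : Tendsto (fun n : ℕ => (n : ℝ)⁻¹ * D n) atTop (𝓝 β) := by
    have h1 : Tendsto (fun n : ℕ => (n : ℝ)⁻¹ * (D n - D 0)) atTop (𝓝 β) := by
      apply hces.congr
      intro n
      rw [hsum n]
    have h2 : Tendsto (fun n : ℕ => (n : ℝ)⁻¹ * D 0) atTop (𝓝 0) := by
      have : Tendsto (fun n : ℕ => (n : ℝ)⁻¹) atTop (𝓝 0) :=
        tendsto_inv_atTop_zero.comp tendsto_natCast_atTop_atTop
      simpa using this.mul_const (D 0)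
    have := h1.add h2
    simp only [add_zero] at this
    apply this.congr
    intro n
    ring
  -- final step
  have hfin : Tendsto (fun n : ℕ => ((n : ℝ)⁻¹ * D n) ^ (-(1/α))) atTop
      (𝓝 (β ^ (-(1/α)))) :=
    ((Real.continuousAt_rpow_const β (-(1/α)) (Or.inl hβ.ne')).tendsto).comp hDn
  have hval : β ^ (-(1/α)) = ((1 - α) / α) ^ (1 / α) := by
    rw [show (1 - α) / α = β⁻¹ by rw [hβdef, inv_div],
      Real.inv_rpow hβ.le, Real.rpow_neg hβ.le]
  rw [← hval]
  apply hfin.congr'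
  filter_upwards [eventually_ge_atTop 1] with n hn
  have hnpos : (0 : ℝ) < n := by exact_mod_cast Nat.lt_of_lt_of_le Nat.zero_lt_one hn
  have hDnpos : 0 < D n := Real.rpow_pos_of_pos (hpos n) _
  rw [Real.mul_rpow (inv_nonneg.mpr hnpos.le) hDnpos.le]
  have h1 : ((n : ℝ)⁻¹) ^ (-(1/α)) = (n : ℝ) ^ (1/α) := by
    rw [Real.inv_rpow hnpos.le, Real.rpow_neg hnpos.le, inv_inv]
  have h2 : (D n) ^ (-(1/α)) = C n := by
    rw [hD, ← Real.rpow_mul (hpos n).le,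
      show (-α) * (-(1/α)) = 1 by field_simp, Real.rpow_one]
  rw [h1, h2]
end

section
/- Let 0 < α < 1 and for each integer k ≥ 2 define x_k = ( k·(1 + 1/(k-1))^{(1-α)/α} − k )^{1/α}. Then the sequence (x_k)_{k≥2} is strictly decreasing and converges to ((1-α)/α)^{1/α} as k → ∞. -/
open Real Filter

theorem x_k_decreasing_limit (α : ℝ) (hα : 0 < α) (hα1 : α < 1) :
    (∀ k : ℕ, 2 ≤ k →
      ((((k : ℝ) + 1) * (1 + 1 / ((k : ℝ) + 1 - 1)) ^ ((1 - α) / α) - ((k : ℝ) + 1)) ^ (1 / α))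
        < (((k : ℝ) * (1 + 1 / ((k : ℝ) - 1)) ^ ((1 - α) / α) - (k : ℝ)) ^ (1 / α))) ∧
    Tendsto (fun k : ℕ =>
        (((k : ℝ) * (1 + 1 / ((k : ℝ) - 1)) ^ ((1 - α) / α) - (k : ℝ)) ^ (1 / α)))
      atTop (nhds (((1 - α) / α) ^ (1 / α))) := by
  have hp1 : 1 < 1 / α := by
    rw [lt_div_iff₀ hα]; linarith
  set p : ℝ := 1 / α with hpdef
  have hp0 : 0 < p := by linarith
  -- rewrite the expression
  have key : ∀ k : ℝ, 2 ≤ k → k * (1 + 1 / (k - 1)) ^ ((1 - α) / α) - k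
      = ((1 + 1 / (k - 1)) ^ p - 1) * (k - 1) - 1 := by
    intro k hk
    have hk1 : (0:ℝ) < k - 1 := by linarith
    have hb : (0:ℝ) < 1 + 1 / (k - 1) := by positivity
    have h1 : (1 - α) / α = p - 1 := by
      rw [hpdef]; field_simp
    rw [h1, Real.rpow_sub hb, Real.rpow_one]
    have hbk : (1 + 1 / (k - 1)) * (k - 1) = k := by field_simp; ring
    have hbne : (1 + 1 / (k - 1)) ≠ 0 := ne_of_gt hb
    field_simp
    ring_nf
  -- slope monotonicity
  have slope_mono : ∀ s t : ℝ, 0 < s → s < t →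
      ((1 + s) ^ p - 1) / s < ((1 + t) ^ p - 1) / t := by
    intro s t hs hst
    have := (strictConvexOn_rpow hp1).secant_strict_mono (a := 1) (x := 1 + s) (y := 1 + t)
      (by norm_num : (1:ℝ) ∈ Set.Ici (0:ℝ))
      (by simp; linarith : (1 + s) ∈ Set.Ici (0:ℝ))
      (by simp; linarith : (1 + t) ∈ Set.Ici (0:ℝ))
      (by intro h; nlinarith [h] : (1 + s) ≠ 1)
      (by intro h; nlinarith [h] : (1 + t) ≠ 1)
      (by linarith)
    simpa [Real.one_rpow] using this
  -- define F
  set F : ℝ → ℝ := fun k => ((1 + 1 / (k - 1)) ^ p - 1) * (k - 1) - 1 with hF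
  have hFslope : ∀ k : ℝ, 2 ≤ k → F k = ((1 + 1/(k-1)) ^ p - 1) / (1/(k-1)) - 1 := by
    intro k hk
    have hk1 : (0:ℝ) < k - 1 := by linarith
    rw [hF]; field_simp
  have hFpos : ∀ k : ℝ, 2 ≤ k → p - 1 < F k := by
    intro k hk
    have hk1 : (0:ℝ) < k - 1 := by linarith
    have ht : (0:ℝ) < 1 / (k - 1) := by positivity
    have := one_add_mul_self_lt_rpow_one_add (by linarith : (-1:ℝ) ≤ 1/(k-1))
      (ne_of_gt ht) hp1
    rw [hF]
    have h2 : (1 + p * (1/(k-1)) - 1) * (k - 1) = p := by field_simp; ring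
    nlinarith [this, h2]
  have hFmono : ∀ k : ℝ, 2 ≤ k → F (k + 1) < F k := by
    intro k hk
    have hk1 : (0:ℝ) < k - 1 := by linarith
    have hk2 : (0:ℝ) < k := by linarith
    rw [hFslope k hk, hFslope (k+1) (by linarith)]
    have hkk : k + 1 - 1 = k := by ring
    have h := slope_mono (1/(k+1-1)) (1/(k-1)) (by rw [hkk]; exact div_pos one_pos hk2)
      (by rw [div_lt_div_iff₀ (by linarith) hk1]; linarith)
    linarith
  -- the limit of F
  have hlim : Tendsto (fun k : ℕ => F k) atTop (nhds (p - 1)) := by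
    have hderiv : HasDerivAt (fun x : ℝ => x ^ p) p 1 := by
      have := Real.hasDerivAt_rpow_const (x := 1) (p := p) (Or.inl one_ne_zero)
      simpa using this
    have hslope := hasDerivAt_iff_tendsto_slope.mp hderiv
    have hu : Tendsto (fun k : ℕ => 1 + 1 / ((k:ℝ) - 1)) atTop (nhds 1) := by
      have h1 : Tendsto (fun k : ℕ => (k:ℝ) - 1) atTop atTop :=
        tendsto_atTop_add_const_right _ _ tendsto_natCast_atTop_atTop
      have h2 : Tendsto (fun k : ℕ => 1 / ((k:ℝ) - 1)) atTop (nhds 0) :=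
        h1.inv_tendsto_atTop.congr (fun k => (one_div _).symm)
      simpa using (tendsto_const_nhds.add h2 : Tendsto (fun k : ℕ => (1:ℝ) + 1/((k:ℝ)-1)) atTop (nhds (1 + 0)))
    have hu' : Tendsto (fun k : ℕ => 1 + 1 / ((k:ℝ) - 1)) atTop (nhdsWithin 1 {(1:ℝ)}ᶜ) := by
      rw [tendsto_nhdsWithin_iff]
      refine ⟨hu, ?_⟩
      filter_upwards [eventually_ge_atTop 2] with k hk
      have hk1 : (0:ℝ) < (k:ℝ) - 1 := by
        have : (2:ℝ) ≤ (k:ℝ) := by exact_mod_cast hk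
        linarith
      have : (0:ℝ) < 1 / ((k:ℝ) - 1) := by positivity
      simp only [Set.mem_compl_iff, Set.mem_singleton_iff]
      intro h
      nlinarith [h]
    have hcomp := hslope.comp hu'
    have : Tendsto (fun k : ℕ => slope (fun x : ℝ => x ^ p) 1 (1 + 1/((k:ℝ)-1)) - 1)
        atTop (nhds (p - 1)) := hcomp.sub tendsto_const_nhds
    refine this.congr' ?_
    filter_upwards [eventually_ge_atTop 2] with k hk
    have hk2 : (2:ℝ) ≤ (k:ℝ) := by exact_mod_cast hk
    have hk1 : (0:ℝ) < (k:ℝ) - 1 := by linarith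
    rw [hFslope _ hk2, slope_def_field]
    norm_num
  have hpa : (1 - α) / α = p - 1 := by rw [hpdef]; field_simp
  constructor
  · intro k hk
    have hk2 : (2:ℝ) ≤ (k:ℝ) := by exact_mod_cast hk
    rw [key _ hk2, key ((k:ℝ)+1) (by linarith)]
    show F ((k:ℝ)+1) ^ p < F (k:ℝ) ^ p
    exact Real.rpow_lt_rpow (by nlinarith [hFpos ((k:ℝ)+1) (by linarith)])
      (hFmono _ hk2) hp0
  · have hpos : (0:ℝ) < p - 1 := by linarith
    have h2 : Tendsto (fun k : ℕ => F k ^ p) atTop (nhds (((1-α)/α) ^ p)) := by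
      rw [hpa]
      exact hlim.rpow_const (Or.inl (ne_of_gt hpos))
    refine Tendsto.congr' ?_ h2
    filter_upwards [eventually_ge_atTop 2] with k hk
    have hk2 : (2:ℝ) ≤ (k:ℝ) := by exact_mod_cast hk
    rw [key _ hk2]
end

section
/- Let s > 1. Then ∫_0^∞ (1 + y^{s-1})^{-s/(s-1)} dy = 1; indeed, an antiderivative of y ↦ (1 + y^{s-1})^{-s/(s-1)} on (0,∞) is y ↦ (1 + y^{1-s})^{1/(1-s)}. -/
open Real MeasureTheory Set Filter Topology

theorem integral_eq_one_and_antiderivative (s : ℝ) (hs : 1 < s) :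
    (∀ y : ℝ, 0 < y →
      HasDerivAt (fun u : ℝ => (1 + u ^ (1 - s)) ^ (1 / (1 - s)))
        ((1 + y ^ (s - 1)) ^ (-s / (s - 1))) y) ∧
    (∫ y in Ioi (0 : ℝ), (1 + y ^ (s - 1)) ^ (-s / (s - 1)) = 1) := by
  have hs1 : (0:ℝ) < s - 1 := by linarith
  have h1s : (1:ℝ) - s < 0 := by linarith
  have h1s' : (1:ℝ) - s ≠ 0 := ne_of_lt h1s
  set F : ℝ → ℝ := fun u : ℝ => (1 + u ^ (1 - s)) ^ (1 / (1 - s)) with hF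
  have hder : ∀ y : ℝ, 0 < y →
      HasDerivAt F ((1 + y ^ (s - 1)) ^ (-s / (s - 1))) y := by
    intro y hy
    have hy0 : y ≠ 0 := ne_of_gt hy
    have hc : (0:ℝ) < 1 + y ^ (1 - s) := by positivity
    have h1 : HasDerivAt (fun u : ℝ => 1 + u ^ (1 - s)) ((1 - s) * y ^ (1 - s - 1)) y := by
      simpa using ((Real.hasDerivAt_rpow_const (p := 1 - s) (Or.inl hy0))).const_add 1
    have h2 : HasDerivAt (fun x : ℝ => x ^ (1 / (1 - s)))
        (1 / (1 - s) * (1 + y ^ (1 - s)) ^ (1 / (1 - s) - 1)) (1 + y ^ (1 - s)) :=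
      Real.hasDerivAt_rpow_const (Or.inl (ne_of_gt hc))
    have h3 := h2.comp y h1
    have hpos : (0:ℝ) < 1 + y ^ (s - 1) := by positivity
    have key : 1 / (1 - s) * (1 + y ^ (1 - s)) ^ (1 / (1 - s) - 1) * ((1 - s) * y ^ (1 - s - 1))
        = (1 + y ^ (s - 1)) ^ (-s / (s - 1)) := by
      have hsplit : 1 + y ^ (1 - s) = y ^ (1 - s) * (1 + y ^ (s - 1)) := by
        rw [mul_add, mul_one, ← Real.rpow_add hy]
        norm_num
        ring
      have he : 1 / (1 - s) - 1 = s / (1 - s) := by field_simp; ring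
      have hq : s / (1 - s) = -s / (s - 1) := by
        rw [show (1:ℝ) - s = -(s - 1) by ring, div_neg, neg_div]
      rw [hsplit, he, Real.mul_rpow (Real.rpow_nonneg hy.le _) hpos.le,
        ← Real.rpow_mul hy.le, show (1 - s) * (s / (1 - s)) = s by field_simp, hq,
        show (1:ℝ) - s - 1 = -s by ring,
        show 1 / (1 - s) * (y ^ s * (1 + y ^ (s - 1)) ^ (-s / (s - 1))) * ((1 - s) * y ^ (-s))
          = (1 / (1 - s) * (1 - s)) * (y ^ s * y ^ (-s)) * (1 + y ^ (s - 1)) ^ (-s / (s - 1))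
          by ring,
        ← Real.rpow_add hy]
      simp [h1s']
    rw [← key]; exact h3
  refine ⟨hder, ?_⟩
  set G : ℝ → ℝ := fun u : ℝ => if u ≤ 0 then 0 else F u with hG
  have hGF : ∀ u : ℝ, 0 < u → G u = F u := by
    intro u hu; simp [hG, not_le.2 hu]
  have hGder : ∀ x ∈ Ioi (0:ℝ), HasDerivAt G ((1 + x ^ (s - 1)) ^ (-s / (s - 1))) x := by
    intro x hx
    refine (hder x hx).congr_of_eventuallyEq ?_
    filter_upwards [eventually_gt_nhds hx] with u hu
    exact hGF u hu
  have hnonneg : ∀ x ∈ Ioi (0:ℝ), 0 ≤ (1 + x ^ (s - 1)) ^ (-s / (s - 1)) := by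
    intro x hx
    have hx' : (0:ℝ) < x := hx
    exact Real.rpow_nonneg (by positivity) _
  have htop : Tendsto G atTop (𝓝 1) := by
    have h1 : Tendsto (fun y : ℝ => y ^ (1 - s)) atTop (𝓝 0) := by
      simpa [neg_sub] using tendsto_rpow_neg_atTop hs1
    have hc : ContinuousAt (fun x : ℝ => x ^ (1 / (1 - s))) 1 :=
      Real.continuousAt_rpow_const _ _ (Or.inl one_ne_zero)
    have h2 : Tendsto F atTop (𝓝 1) := by
      have h15 : Tendsto (fun y : ℝ => 1 + y ^ (1 - s)) atTop (𝓝 1) := by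
        simpa using (tendsto_const_nhds.add h1 : Tendsto (fun y : ℝ => 1 + y ^ (1 - s)) atTop (𝓝 (1 + 0)))
      simpa [hF, Function.comp_def] using hc.tendsto.comp h15
    refine h2.congr' ?_
    filter_upwards [eventually_gt_atTop (0:ℝ)] with y hy
    exact (hGF y hy).symm
  have hG0 : G 0 = 0 := by simp [hG]
  have hcont : ContinuousWithinAt G (Ici (0:ℝ)) 0 := by
    have hF0 : Tendsto F (𝓝[>] (0:ℝ)) (𝓝 0) := by
      have ha : Tendsto (fun y : ℝ => y ^ (1 - s)) (𝓝[>] (0:ℝ)) atTop := by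
        have hinv : Tendsto (fun y : ℝ => y⁻¹) (𝓝[>] (0:ℝ)) atTop := tendsto_inv_nhdsGT_zero
        refine ((tendsto_rpow_atTop hs1).comp hinv).congr' ?_
        filter_upwards [self_mem_nhdsWithin] with y (hy : 0 < y)
        simp only [Function.comp]
        rw [← Real.rpow_neg_one y, ← Real.rpow_mul hy.le]
        congr 1
        ring
      have hb : Tendsto (fun t : ℝ => t ^ (1 / (1 - s))) atTop (𝓝 0) := by
        have h := tendsto_rpow_neg_atTop (show (0:ℝ) < 1 / (s - 1) by positivity)
        have he2 : -(1 / (s - 1)) = 1 / (1 - s) := by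
          rw [show (1:ℝ) - s = -(s - 1) by ring, div_neg]
        rwa [he2] at h
      have hadd : Tendsto (fun y : ℝ => 1 + y ^ (1 - s)) (𝓝[>] (0:ℝ)) atTop :=
        tendsto_atTop_add_const_left _ 1 ha
      exact hb.comp hadd
    rw [ContinuousWithinAt, hG0, ← Ioi_insert, nhdsWithin_insert, tendsto_sup]
    constructor
    · simpa [hG0] using tendsto_pure_nhds G 0
    · refine hF0.congr' ?_
      filter_upwards [self_mem_nhdsWithin] with y (hy : 0 < y)
      exact (hGF y hy).symm
  rw [integral_Ioi_of_hasDerivAt_of_nonneg hcont hGder hnonneg htop, hG0, sub_zero]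
end
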